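/- In an AUAI approximation system, (X ∪ Y)^{u1} = X^{u1} ∪ Y^{u1} for all subsets X, Y of S. -/
import Mathlib

open Set

/-- AU-lower approximation: union of all cover elements included in `X`. -/
def AUlower {α : Type*} {n : ℕ} (K : Fin (n + 2) → Set α) (X : Set α) : Set α :=
  ⋃₀ {A | ∃ i : Fin (n + 2), A = K i ∧ K i ⊆ X}

/-- AU-upper approximation: intersection of all unions of cover elements covering `X`. -/
def AUupper {α : Type*} {n : ℕ} (K : Fin (n + 2) → Set α) (X : Set α) : Set α :=
  ⋂₀ {A | ∃ I : Set (Fin (n + 2)), A = (⋃ i ∈ I, K i) ∧ X ⊆ A}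

/-- AI-lower approximation: union of all intersections of complements included in `X`. -/
def AIlower {α : Type*} {n : ℕ} (K : Fin (n + 2) → Set α) (X : Set α) : Set α :=
  ⋃₀ {A | ∃ I : Set (Fin (n + 2)), A = (⋂ i ∈ I, (K i)ᶜ) ∧ A ⊆ X}

/-- AI-upper approximation: intersection of all complements of cover elements containing `X`. -/
def AIupper {α : Type*} {n : ℕ} (K : Fin (n + 2) → Set α) (X : Set α) : Set α :=
  ⋂₀ {A | ∃ i : Fin (n + 2), A = (K i)ᶜ ∧ X ⊆ (K i)ᶜ}

theorem stmt3 {α : Type*} {n : ℕ} (K : Fin (n + 2) → Set α)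
    (hK0 : K 0 = ∅) (hKtop : K (Fin.last (n + 1)) = Set.univ) (X Y : Set α) :
    AUupper K (X ∪ Y) = AUupper K X ∪ AUupper K Y := by
  apply Set.Subset.antisymm
  · intro x hx
    by_contra hc
    rw [Set.mem_union, not_or] at hc
    obtain ⟨hx1, hx2⟩ := hc
    simp only [AUupper, Set.mem_sInter, Set.mem_setOf_eq, not_forall] at hx1 hx2
    obtain ⟨A, ⟨I, rfl, hXA⟩, hxA⟩ := hx1
    obtain ⟨B, ⟨J, rfl, hYB⟩, hxB⟩ := hx2
    simp only [AUupper, Set.mem_sInter, Set.mem_setOf_eq] at hx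
    have := hx (⋃ i ∈ I ∪ J, K i) ⟨I ∪ J, rfl, ?_⟩
    · apply hxA
      rcases Set.mem_iUnion₂.mp this with ⟨i, hi, hxi⟩
      rcases hi with hi | hi
      · exact Set.mem_biUnion hi hxi
      · exact absurd (Set.mem_biUnion hi hxi) hxB
    · rintro y (hy | hy)
      · rcases Set.mem_iUnion₂.mp (hXA hy) with ⟨i, hi, hyi⟩
        exact Set.mem_biUnion (Or.inl hi) hyi
      · rcases Set.mem_iUnion₂.mp (hYB hy) with ⟨i, hi, hyi⟩
        exact Set.mem_biUnion (Or.inr hi) hyi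
  · rintro x (hx | hx) A ⟨I, rfl, hA⟩
    · exact hx _ ⟨I, rfl, (Set.subset_union_left).trans hA⟩
    · exact hx _ ⟨I, rfl, (Set.subset_union_right).trans hA⟩
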